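/- A nilpotent group G has property (NL) if and only if every group homomorphism from G to the additive group ℝ is trivial. -/

import Mathlib

noncomputable section

open Metric

/-- The Gromov product of `x` and `y` at `w` with respect to a distance function `d`. -/
def gromovProd {α : Type*} (d : α → α → ℝ) (w x y : α) : ℝ :=
  (d w x + d w y - d x y) / 2

/-- Gromov hyperbolicity via the four-point condition, for an arbitrary distance function. -/
def FourPointHyperbolic {α : Type*} (d : α → α → ℝ) : Prop :=
  ∃ δ : ℝ, 0 ≤ δ ∧ ∀ w x y z : α,
    min (gromovProd d w x z) (gromovProd d w z y) - δ ≤ gromovProd d w x y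

/-- A geodesic from `x` to `y`, parametrized by arc length on `[0, dist x y]`. -/
def IsGeodesicSeg {X : Type*} [MetricSpace X] (x y : X) (f : ℝ → X) : Prop :=
  f 0 = x ∧ f (dist x y) = y ∧
    ∀ s ∈ Set.Icc (0 : ℝ) (dist x y), ∀ t ∈ Set.Icc (0 : ℝ) (dist x y),
      dist (f s) (f t) = |s - t|

/-- A geodesic metric space: any two points are joined by a geodesic. -/
def GeodesicSpace (X : Type*) [MetricSpace X] : Prop :=
  ∀ x y : X, ∃ f : ℝ → X, IsGeodesicSeg x y f

/-- The image (as a set) of a geodesic segment from `x` to `y`. -/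
def geodSet {X : Type*} [MetricSpace X] (x y : X) (f : ℝ → X) : Set X :=
  f '' Set.Icc (0 : ℝ) (dist x y)

/-- `p` lies within distance `δ` of the set `S` (i.e. in the closed `δ`-neighborhood). -/
def WithinDistOf {X : Type*} [MetricSpace X] (δ : ℝ) (p : X) (S : Set X) : Prop :=
  ∃ q ∈ S, dist p q ≤ δ

/-- Rips condition: each side of every geodesic triangle is contained in the union of the
closed `δ`-neighborhoods of the other two sides. -/
def RipsHyperbolic (X : Type*) [MetricSpace X] (δ : ℝ) : Prop :=
  ∀ x y z : X, ∀ fxy fyz fxz : ℝ → X,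
    IsGeodesicSeg x y fxy → IsGeodesicSeg y z fyz → IsGeodesicSeg x z fxz →
      (∀ p ∈ geodSet x y fxy, WithinDistOf δ p (geodSet y z fyz ∪ geodSet x z fxz)) ∧
      (∀ p ∈ geodSet y z fyz, WithinDistOf δ p (geodSet x y fxy ∪ geodSet x z fxz)) ∧
      (∀ p ∈ geodSet x z fxz, WithinDistOf δ p (geodSet x y fxy ∪ geodSet y z fyz))

/-- An (isometric) action of a group `G` on a metric space `X`. -/
structure IsIsomAction (G : Type*) [Group G] (X : Type*) [MetricSpace X]
    (act : G → X → X) : Prop where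
  act_one : ∀ x : X, act 1 x = x
  act_mul : ∀ (g h : G) (x : X), act (g * h) x = act g (act h x)
  isometry : ∀ (g : G) (x y : X), dist (act g x) (act g y) = dist x y

/-- A cobounded action: some (hence any) orbit is coarsely dense. -/
def CoboundedAction {G X : Type*} [Group G] [MetricSpace X] (act : G → X → X) : Prop :=
  ∃ (x : X) (R : ℝ), 0 ≤ R ∧ ∀ y : X, ∃ g : G, dist y (act g x) ≤ R

/-- A quasi-isometric embedding between two "spaces" given by distance functions. -/
def IsQIEmbWith {α β : Type*} (dα : α → α → ℝ) (dβ : β → β → ℝ) (f : α → β) : Prop :=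
  ∃ A B : ℝ, 1 ≤ A ∧ 0 ≤ B ∧ ∀ x y : α,
    dα x y / A - B ≤ dβ (f x) (f y) ∧ dβ (f x) (f y) ≤ A * dα x y + B

/-- The image of `f` is coarsely dense. -/
def CoarselyDenseWith {α β : Type*} (dβ : β → β → ℝ) (f : α → β) : Prop :=
  ∃ C : ℝ, 0 ≤ C ∧ ∀ y : β, ∃ x : α, dβ (f x) y ≤ C

/-- A quasi-isometry between two "spaces" given by distance functions. -/
def IsQuasiIsometryWith {α β : Type*} (dα : α → α → ℝ) (dβ : β → β → ℝ) (f : α → β) : Prop :=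
  IsQIEmbWith dα dβ f ∧ CoarselyDenseWith dβ f

/-- The standard distance on `ℤ`. -/
def zdist : ℤ → ℤ → ℝ := fun m n => |(m : ℝ) - (n : ℝ)|

/-- `g` is loxodromic for the action `act`: for some basepoint `x`, the orbit map
`n ↦ g ^ n • x` is a quasi-isometric embedding of `ℤ`. -/
def LoxodromicWith {G α : Type*} [Group G] (d : α → α → ℝ) (act : G → α → α) (g : G) : Prop :=
  ∃ x : α, IsQIEmbWith zdist d (fun n : ℤ => act (g ^ n) x)

/-- Acylindricity of an action, with respect to a distance function. -/
def AcylindricalWith {G α : Type*} (d : α → α → ℝ) (act : G → α → α) : Prop :=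
  ∀ ε : ℝ, 0 < ε → ∃ (R : ℝ) (N : ℕ), 0 ≤ R ∧ ∀ x y : α, R ≤ d x y →
    {g : G | d x (act g x) ≤ ε ∧ d y (act g y) ≤ ε}.Finite ∧
    Nat.card {g : G | d x (act g x) ≤ ε ∧ d y (act g y) ≤ ε} ≤ N

/-- Two subsets are within finite Hausdorff distance of each other. -/
def FinHausdorffClose {α : Type*} (d : α → α → ℝ) (A B : Set α) : Prop :=
  ∃ C : ℝ, (∀ a ∈ A, ∃ b ∈ B, d a b ≤ C) ∧ (∀ b ∈ B, ∃ a ∈ A, d a b ≤ C)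

/-- The positive (`pos = true`) or negative (`pos = false`) orbit ray of `g` at `x`. -/
def orbitRay {G α : Type*} [Group G] (act : G → α → α) (g : G) (x : α) (pos : Bool) : Set α :=
  Set.range fun n : ℕ => act (g ^ (if pos then (n : ℤ) else -(n : ℤ))) x

/-- Independence of two loxodromic elements with respect to the basepoint `x`: no orbit ray of
`g` is within finite Hausdorff distance of an orbit ray of `h`. -/
def IndepWith {G α : Type*} [Group G] (d : α → α → ℝ) (act : G → α → α) (x : α)
    (g h : G) : Prop :=
  ∀ s t : Bool, ¬ FinHausdorffClose d (orbitRay act g x s) (orbitRay act h x t)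

/-- A group is virtually cyclic if it has a cyclic subgroup of finite index. -/
def VirtuallyCyclic (G : Type*) [Group G] : Prop :=
  ∃ H : Subgroup G, IsCyclic ↥H ∧ H.FiniteIndex

/-- `S` is a generating set of `G`. -/
def IsGenSet {G : Type*} [Group G] (S : Set G) : Prop :=
  Subgroup.closure S = ⊤

/-- The word length of `g` with respect to `S`: the least `n` such that `g` is a product of
`n` elements of `S ∪ S⁻¹`. -/
def wordLength {G : Type*} [Group G] (S : Set G) (g : G) : ℕ :=
  sInf {n : ℕ | ∃ l : List G, l.length = n ∧ (∀ s ∈ l, s ∈ S ∨ s⁻¹ ∈ S) ∧ l.prod = g}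

/-- The word metric `d_S(g,h) = ‖g⁻¹h‖_S` on `G`. -/
def wordDist {G : Type*} [Group G] (S : Set G) : G → G → ℝ :=
  fun g h => (wordLength S (g⁻¹ * h) : ℝ)

/-- `S ⪯ T` : `S` is dominated by `T`, i.e. `sup_{t ∈ T} ‖t‖_S < ∞`. -/
def GenSetDominated {G : Type*} [Group G] (S T : Set G) : Prop :=
  ∃ M : ℕ, ∀ t ∈ T, wordLength S t ≤ M

/-- Equivalence of generating sets: mutual domination. -/
def GenSetEquiv {G : Type*} [Group G] (S T : Set G) : Prop :=
  GenSetDominated S T ∧ GenSetDominated T S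

/-- The left multiplication action of a group on itself. -/
def leftTranslation {G : Type*} [Group G] : G → G → G := fun g x => g * x

universe uX uG

/-- A bundled isometric action of `G` on a geodesic, δ-hyperbolic (Rips condition)
metric space. -/
structure GrpActHypSpace (G : Type uG) [Group G] : Type (max uG (uX + 1)) where
  carrier : Type uX
  [inst : MetricSpace carrier]
  act : G → carrier → carrier
  isIsomAction : IsIsomAction G carrier act
  δ : ℝ
  δ_nonneg : 0 ≤ δ
  geodesic : GeodesicSpace carrier
  rips : RipsHyperbolic carrier δ

attribute [instance] GrpActHypSpace.inst

/-- Property (NL): no isometric action of `G` on a geodesic Gromov-hyperbolic metric space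
has a loxodromic element. -/
def PropNL (G : Type uG) [Group G] : Prop :=
  ∀ A : GrpActHypSpace.{uX, uG} G, ∀ g : G,
    ¬ LoxodromicWith (fun a b : A.carrier => dist a b) A.act g


set_option linter.unusedSectionVars false
set_option maxHeartbeats 1000000

namespace NL7

open scoped commutatorElement

variable {G : Type uG} [Group G]

section Subadd

variable {p : G → ℝ} (h1 : p 1 = 0) (hinv : ∀ a : G, p a⁻¹ = p a)
  (hmul : ∀ a b : G, p (a * b) ≤ p a + p b)

include h1 hinv hmul

theorem p_nonneg (a : G) : 0 ≤ p a := by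
  have := hmul a a⁻¹
  rw [mul_inv_cancel, h1, hinv] at this
  linarith

theorem p_pow_le (a : G) : ∀ k : ℕ, p (a ^ k) ≤ k * p a := by
  intro k
  induction k with
  | zero => simp [h1]
  | succ n ih =>
    have := hmul (a ^ n) a
    rw [← pow_succ] at this
    push_cast
    nlinarith [p_nonneg h1 hinv hmul a]

end Subadd

theorem comm_pow_left (a b : G) (hc : ∀ x : G, Commute ⁅a, b⁆ x) :
    ∀ n : ℕ, ⁅a ^ n, b⁆ = ⁅a, b⁆ ^ n := by
  intro n
  induction n with
  | zero => simp [commutatorElement_def]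
  | succ n ih =>
    have key : ⁅a ^ (n+1), b⁆ = a * ⁅a ^ n, b⁆ * a⁻¹ * ⁅a, b⁆ := by
      simp only [commutatorElement_def, pow_succ]
      group
    rw [key, ih]
    have hca : ⁅a, b⁆ ^ n * a = a * ⁅a, b⁆ ^ n := ((hc a).pow_left n).eq
    calc a * ⁅a, b⁆ ^ n * a⁻¹ * ⁅a, b⁆ = ⁅a, b⁆ ^ n * a * a⁻¹ * ⁅a, b⁆ := by rw [← hca]
    _ = ⁅a, b⁆ ^ (n + 1) := by rw [mul_inv_cancel_right, ← pow_succ]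

theorem comm_pow_right (a b : G) (hc : ∀ x : G, Commute ⁅a, b⁆ x) :
    ∀ n : ℕ, ⁅a, b ^ n⁆ = ⁅a, b⁆ ^ n := by
  intro n
  induction n with
  | zero => simp [commutatorElement_def]
  | succ n ih =>
    have key : ⁅a, b ^ (n+1)⁆ = ⁅a, b⁆ * (b * ⁅a, b ^ n⁆ * b⁻¹) := by
      simp only [commutatorElement_def, pow_succ]
      group
    rw [key, ih]
    have hcb : ⁅a, b⁆ ^ n * b = b * ⁅a, b⁆ ^ n := ((hc b).pow_left n).eq
    calc ⁅a, b⁆ * (b * ⁅a, b⁆ ^ n * b⁻¹) = ⁅a, b⁆ * (⁅a, b⁆ ^ n * b * b⁻¹) := by rw [← hcb]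
    _ = ⁅a, b⁆ ^ (n + 1) := by rw [mul_inv_cancel_right, ← pow_succ']

theorem comm_pow_pow (a b : G) (hc : ∀ x : G, Commute ⁅a, b⁆ x) (n : ℕ) :
    ⁅a ^ n, b ^ n⁆ = ⁅a, b⁆ ^ (n * n) := by
  have h1 := comm_pow_left a b hc n
  have hc' : ∀ x : G, Commute ⁅a ^ n, b⁆ x := by
    intro x; rw [h1]; exact (hc x).pow_left n
  rw [comm_pow_right (a ^ n) b hc' n, h1, ← pow_mul]


section Subadd

variable {p : G → ℝ} (h1 : p 1 = 0) (hinv : ∀ a : G, p a⁻¹ = p a)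
  (hmul : ∀ a b : G, p (a * b) ≤ p a + p b)

include h1 hinv hmul

/-- single central commutator has sublinear powers -/
theorem central_comm_small (a b : G) (hc : ∀ x : G, Commute ⁅a, b⁆ x)
    (δ : ℝ) (hδ : 0 < δ) : ∃ k : ℕ, 1 ≤ k ∧ p (⁅a, b⁆ ^ k) ≤ δ * k := by
  obtain ⟨n, hn1, hn⟩ : ∃ n : ℕ, 1 ≤ n ∧ 2 * (p a + p b) ≤ δ * n := by
    refine ⟨max 1 ⌈(2 * (p a + p b)) / δ⌉₊, le_max_left _ _, ?_⟩
    have h2 : ((2 * (p a + p b)) / δ) ≤ (⌈(2 * (p a + p b)) / δ⌉₊ : ℝ) := Nat.le_ceil _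
    have h3 : (⌈(2 * (p a + p b)) / δ⌉₊ : ℝ) ≤ ((max 1 ⌈(2 * (p a + p b)) / δ⌉₊ : ℕ) : ℝ) := by
      exact_mod_cast Nat.le_max_right 1 _ |>.trans (le_of_eq rfl) |>.trans (le_refl _) |>.trans
        (le_of_eq rfl)
    have := (div_le_iff₀ hδ).mp (h2.trans h3)
    linarith [this]
  refine ⟨n * n, Nat.one_le_iff_ne_zero.mpr (by positivity), ?_⟩
  rw [← comm_pow_pow a b hc n]
  have hexp : p ⁅a ^ n, b ^ n⁆ ≤ 2 * ((n : ℝ) * p a + (n : ℝ) * p b) := by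
    have e1 := hmul (a ^ n * b ^ n * (a ^ n)⁻¹) ((b ^ n)⁻¹)
    have e2 := hmul (a ^ n * b ^ n) ((a ^ n)⁻¹)
    have e3 := hmul (a ^ n) (b ^ n)
    have i1 := hinv (a ^ n); have i2 := hinv (b ^ n)
    have q1 := p_pow_le (p := p) h1 hinv hmul a n
    have q2 := p_pow_le (p := p) h1 hinv hmul b n
    rw [commutatorElement_def]
    calc p (a ^ n * b ^ n * (a ^ n)⁻¹ * (b ^ n)⁻¹) ≤
        p (a ^ n * b ^ n * (a ^ n)⁻¹) + p ((b ^ n)⁻¹) := e1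
      _ ≤ p (a ^ n * b ^ n) + p ((a ^ n)⁻¹) + p ((b ^ n)⁻¹) := by linarith
      _ ≤ 2 * ((n : ℝ) * p a + (n : ℝ) * p b) := by rw [i1, i2]; linarith
  refine hexp.trans ?_
  push_cast
  nlinarith [p_nonneg (p := p) h1 hinv hmul a, p_nonneg (p := p) h1 hinv hmul b,
    (Nat.one_le_cast (α := ℝ)).mpr hn1]

/-- every element of a commutator subgroup `⁅H, ⊤⁆` that is central has sublinear powers -/
theorem central_commutator_small (H : Subgroup G)
    (hcen : ∀ z ∈ ⁅H, (⊤ : Subgroup G)⁆, ∀ x : G, Commute z x)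
    (z : G) (hz : z ∈ ⁅H, (⊤ : Subgroup G)⁆) :
    ∀ δ : ℝ, 0 < δ → ∃ k : ℕ, 1 ≤ k ∧ p (z ^ k) ≤ δ * k := by
  rw [Subgroup.commutator_def] at hz
  induction hz using Subgroup.closure_induction with
  | mem w hw =>
    obtain ⟨a, ha, b, -, rfl⟩ := hw
    intro δ hδ
    refine central_comm_small h1 hinv hmul a b ?_ δ hδ
    exact hcen _ (Subgroup.commutator_mem_commutator ha (Subgroup.mem_top b))
  | one =>
    intro δ hδ
    exact ⟨1, le_refl 1, by simp [h1]; positivity⟩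
  | mul x y hx hy ihx ihy =>
    intro δ hδ
    obtain ⟨k₁, hk₁, hx₁⟩ := ihx (δ/2) (by positivity)
    obtain ⟨k₂, hk₂, hy₂⟩ := ihy (δ/2) (by positivity)
    have hcom : Commute x y := by
      refine hcen x ?_ y
      rw [Subgroup.commutator_def]; exact hx
    refine ⟨k₁ * k₂, Nat.one_le_iff_ne_zero.mpr (by positivity), ?_⟩
    rw [hcom.mul_pow]
    have b1 : p (x ^ (k₁ * k₂)) ≤ (k₂ : ℝ) * p (x ^ k₁) := by
      rw [pow_mul]; exact p_pow_le (p := p) h1 hinv hmul (x ^ k₁) k₂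
    have b2 : p (y ^ (k₁ * k₂)) ≤ (k₁ : ℝ) * p (y ^ k₂) := by
      rw [mul_comm k₁ k₂, pow_mul]; exact p_pow_le (p := p) h1 hinv hmul (y ^ k₂) k₁
    have := hmul (x ^ (k₁ * k₂)) (y ^ (k₁ * k₂))
    have c1 : (0:ℝ) < k₁ := by exact_mod_cast hk₁
    have c2 : (0:ℝ) < k₂ := by exact_mod_cast hk₂
    push_cast
    nlinarith [p_nonneg (p := p) h1 hinv hmul (x ^ k₁), p_nonneg (p := p) h1 hinv hmul (y ^ k₂)]
  | inv x hx ih =>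
    intro δ hδ
    obtain ⟨k, hk, hxk⟩ := ih δ hδ
    refine ⟨k, hk, ?_⟩
    rw [inv_pow, hinv]
    exact hxk


end Subadd

universe u

theorem distortion : ∀ (r : ℕ) (G : Type u) [Group G],
    (⊤ : Subgroup G).lowerCentralSeries r = ⊥ → ∀ p : G → ℝ, p 1 = 0 → (∀ a : G, p a⁻¹ = p a) →
    (∀ a b : G, p (a * b) ≤ p a + p b) → ∀ c ∈ commutator G, ∀ ε : ℝ, 0 < ε →
    ∃ m : ℕ, 1 ≤ m ∧ p (c ^ m) ≤ ε * m := by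
  intro r
  induction r with
  | zero =>
    intro G _ hG p h1 hinv hmul c hc ε hε
    have : c ∈ (⊥ : Subgroup G) := hG ▸ Subgroup.mem_top c
    rw [Subgroup.mem_bot] at this
    subst this
    exact ⟨1, le_refl 1, by simp [h1]; positivity⟩
  | succ r ih =>
    intro G _ hG p h1 hinv hmul c hc ε hε
    rcases r with - | r'
    · -- abelian case : commutator G = lowerCentralSeries G 1 = ⊥
      have hcl : c ∈ (⊤ : Subgroup G).lowerCentralSeries (0 + 1) := hc
      rw [hG, Subgroup.mem_bot] at hcl
      subst hcl
      exact ⟨1, le_refl 1, by simp [h1]; positivity⟩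
    set N : Subgroup G := (⊤ : Subgroup G).lowerCentralSeries (r' + 1) with hN
    have hbot : ⁅N, (⊤ : Subgroup G)⁆ = ⊥ := hG
    have hcen : ∀ z ∈ N, ∀ x : G, Commute z x := by
      intro z hz x
      have : ⁅z, x⁆ ∈ ⁅N, (⊤ : Subgroup G)⁆ :=
        Subgroup.commutator_mem_commutator hz (Subgroup.mem_top x)
      rw [hbot, Subgroup.mem_bot] at this
      exact commutatorElement_eq_one_iff_commute.mp this
    haveI : N.Normal := inferInstance
    set Q := G ⧸ N with hQdef
    set π : G →* Q := QuotientGroup.mk' N with hπ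
    have hπsurj : Function.Surjective π := QuotientGroup.mk'_surjective N
    -- lower central series of the quotient
    have hle : ∀ n : ℕ, (⊤ : Subgroup Q).lowerCentralSeries n ≤ Subgroup.map π ((⊤ : Subgroup G).lowerCentralSeries n) := by
      intro n
      induction n with
      | zero =>
        rw [lowerCentralSeries_zero, lowerCentralSeries_zero,
          Subgroup.map_top_of_surjective π hπsurj]
      | succ n ihn =>
        have : (⊤ : Subgroup Q).lowerCentralSeries (n+1) = ⁅(⊤ : Subgroup Q).lowerCentralSeries n, (⊤ : Subgroup Q)⁆ := rfl
        rw [this]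
        have htop : (⊤ : Subgroup Q) ≤ Subgroup.map π ⊤ := by
          rw [Subgroup.map_top_of_surjective π hπsurj]
        refine le_trans (Subgroup.commutator_mono ihn htop) ?_
        rw [← Subgroup.map_commutator]
        exact le_rfl
    have hQ : (⊤ : Subgroup Q).lowerCentralSeries (r' + 1) = ⊥ := by
      rw [eq_bot_iff]
      refine le_trans (hle (r' + 1)) ?_
      rw [← hN]
      intro q hq
      obtain ⟨g, hg, rfl⟩ := hq
      rw [Subgroup.mem_bot]
      rw [hπ]
      have : g ∈ (QuotientGroup.mk' N).ker := by rw [QuotientGroup.ker_mk']; exact hg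
      exact this
    -- the induced length function on the quotient
    set S : Q → Set ℝ := fun q => {x : ℝ | ∃ g : G, π g = q ∧ p g = x} with hS
    have hSne : ∀ q : Q, (S q).Nonempty := by
      intro q; obtain ⟨g, rfl⟩ := hπsurj q; exact ⟨p g, g, rfl, rfl⟩
    have hSbdd : ∀ q : Q, BddBelow (S q) := by
      intro q
      exact ⟨0, fun x ⟨g, _, hg⟩ => hg ▸ p_nonneg h1 hinv hmul g⟩
    set pbar : Q → ℝ := fun q => sInf (S q) with hpbar
    have hpbar_le : ∀ (q : Q) (g : G), π g = q → pbar q ≤ p g := by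
      intro q g hg
      exact csInf_le (hSbdd q) ⟨g, hg, rfl⟩
    have hpbar_nonneg : ∀ q : Q, 0 ≤ pbar q := by
      intro q
      exact le_csInf (hSne q) fun x ⟨g, _, hg⟩ => hg ▸ p_nonneg h1 hinv hmul g
    have hq1 : pbar 1 = 0 := by
      refine le_antisymm ?_ (hpbar_nonneg 1)
      have := hpbar_le 1 1 (map_one π)
      rw [h1] at this
      exact this
    have hqinv : ∀ q : Q, pbar q⁻¹ = pbar q := by
      intro q
      have hsets : S q⁻¹ = S q := by
        ext x
        constructor
        · rintro ⟨g, hg, rfl⟩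
          exact ⟨g⁻¹, by rw [map_inv, hg, inv_inv], hinv g ▸ rfl⟩
        · rintro ⟨g, hg, rfl⟩
          exact ⟨g⁻¹, by rw [map_inv, hg], hinv g ▸ rfl⟩
      show sInf (S q⁻¹) = sInf (S q)
      rw [hsets]
    have hqmul : ∀ q q' : Q, pbar (q * q') ≤ pbar q + pbar q' := by
      intro q q'
      refine le_of_forall_pos_le_add ?_
      intro δ hδ
      obtain ⟨x, ⟨g, hg, rfl⟩, hx⟩ := Real.lt_sInf_add_pos (hSne q) (half_pos hδ)
      obtain ⟨y, ⟨g', hg', rfl⟩, hy⟩ := Real.lt_sInf_add_pos (hSne q') (half_pos hδ)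
      have hmem : π (g * g') = q * q' := by rw [map_mul, hg, hg']
      calc pbar (q * q') ≤ p (g * g') := hpbar_le _ _ hmem
        _ ≤ p g + p g' := hmul g g'
        _ ≤ pbar q + pbar q' + δ := by
            have : pbar q = sInf (S q) := rfl
            have : pbar q' = sInf (S q') := rfl
            linarith [hx, hy]
    -- apply the induction hypothesis in the quotient
    have hcQ : π c ∈ commutator Q := by
      have h1' : π c ∈ Subgroup.map π (commutator G) := Subgroup.mem_map_of_mem π hc
      have h2' : Subgroup.map π (commutator G) = commutator Q := by
        rw [commutator_def, commutator_def, Subgroup.map_commutator,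
          Subgroup.map_top_of_surjective π hπsurj]
      rw [← h2']; exact h1'
    obtain ⟨m, hm1, hmle⟩ := ih Q hQ pbar hq1 hqinv hqmul (π c) hcQ (ε/4)
      (by positivity)
    have hmpos : (0:ℝ) < m := by exact_mod_cast hm1
    -- extract a good representative
    have hposε : 0 < ε/4 * m := by positivity
    obtain ⟨x, ⟨g, hg, rfl⟩, hx⟩ := Real.lt_sInf_add_pos (hSne (π c ^ m)) hposε
    have hgsmall : p g < ε/2 * m := by
      have : sInf (S (π c ^ m)) ≤ ε/4 * m := hmle
      have h4 : p g < ε/4 * m + ε/4 * m := by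
        calc p g < sInf (S (π c ^ m)) + ε/4 * m := hx
          _ ≤ ε/4 * m + ε/4 * m := by linarith
      linarith
    -- z is in N
    have hgeq : π (c ^ m) = π g := by rw [map_pow, hg]
    have hzN : (c ^ m)⁻¹ * g ∈ N := by
      have := (QuotientGroup.eq (s := N) (a := c ^ m) (b := g)).mp ?_
      · exact this
      · have h5 : (QuotientGroup.mk (c ^ m) : G ⧸ N) = QuotientGroup.mk g := hgeq
        exact h5
    set z : G := (c ^ m)⁻¹ * g with hz
    have hgz : g = c ^ m * z := by rw [hz]; group
    have hcm : c ^ m = g * z⁻¹ := by rw [hz]; group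
    -- sublinear powers of z
    obtain ⟨k, hk1, hzk⟩ := central_commutator_small h1 hinv hmul
      ((⊤ : Subgroup G).lowerCentralSeries r') hcen z hzN (ε/2 * m) (by positivity)
    have hkpos : (0:ℝ) < k := by exact_mod_cast hk1
    refine ⟨m * k, Nat.one_le_iff_ne_zero.mpr (by positivity), ?_⟩
    have hcomm : Commute g z⁻¹ := ((hcen z hzN g).symm).inv_right
    have hpow : c ^ (m * k) = g ^ k * (z⁻¹) ^ k := by
      rw [pow_mul, hcm, hcomm.mul_pow]
    have b1 : p (g ^ k) ≤ (k:ℝ) * p g := p_pow_le h1 hinv hmul g k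
    have b2 : p ((z⁻¹) ^ k) = p (z ^ k) := by rw [inv_pow, hinv]
    have := hmul (g ^ k) ((z⁻¹) ^ k)
    rw [hpow]
    push_cast
    nlinarith [hzk, hgsmall, b1, b2, this]

theorem exists_pow_mem_commutator
    (hφ : ∀ (φ : G →* Multiplicative ℝ) (g : G), φ g = 1) (g : G) :
    ∃ n : ℕ, 1 ≤ n ∧ g ^ n ∈ commutator G := by
  by_contra h
  push_neg at h
  -- the image of `g` in the abelianization has infinite order
  set A := Additive (Abelianization G) with hA
  set a : A := Additive.ofMul (Abelianization.of g) with ha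
  have hof : ∀ x : G, Abelianization.of x = 1 ↔ x ∈ commutator G := by
    intro x
    exact QuotientGroup.eq_one_iff x
  have hpow : ∀ n : ℕ, 1 ≤ n → (Abelianization.of g) ^ n ≠ 1 := by
    intro n hn hcon
    rw [← map_pow] at hcon
    exact h n hn ((hof (g ^ n)).mp hcon)
  have hinj : Function.Injective (zmultiplesHom A a) := by
    intro n m hnm
    by_contra hne
    wlog hlt : m < n generalizing n m
    · exact this hnm.symm (Ne.symm hne) (by omega)
    have hz : (n - m) • a = 0 := by
      have h1 : (n : ℤ) • a = m • a := by
        simpa [zmultiplesHom_apply] using hnm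
      rw [sub_smul, h1, sub_self]
    have hkpos : 0 < n - m := by omega
    have hthis : (Abelianization.of g) ^ (n - m) = 1 := by
      have h6 := hz
      rw [ha, ← ofMul_zpow] at h6
      exact h6
    obtain ⟨k', hk'⟩ : ∃ k' : ℕ, n - m = (k' : ℤ) := ⟨(n - m).toNat, by omega⟩
    rw [hk', zpow_natCast] at hthis
    exact hpow k' (by omega) hthis
  -- extend to a homomorphism to ℝ using divisibility
  have hBaer : Module.Baer ℤ ℝ := Module.Baer.of_divisible ℝ
  obtain ⟨F, hF⟩ := hBaer.extension_property_addMonoidHom (zmultiplesHom A a) hinj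
    (zmultiplesHom ℝ (1 : ℝ))
  set φ : G →* Multiplicative ℝ :=
    { toFun := fun x => Multiplicative.ofAdd (F (Additive.ofMul (Abelianization.of x)))
      map_one' := by simp
      map_mul' := by
        intro x y
        simp [map_mul, ← ofAdd_add] } with hφdef
  have : φ g = 1 := hφ φ g
  have hφg : φ g = Multiplicative.ofAdd (F a) := rfl
  have hFa : F a = 1 := by
    have h1 : F ((zmultiplesHom A a) (1 : ℤ)) = (zmultiplesHom ℝ (1:ℝ)) (1 : ℤ) := by
      rw [← AddMonoidHom.comp_apply, hF]
    simpa [zmultiplesHom_apply] using h1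
  rw [hφg, hFa] at this
  have : (1 : ℝ) = 0 := by
    have h2 := congrArg Multiplicative.toAdd this
    simpa using h2
  norm_num at this

theorem rdist (a b : ULift.{u} ℝ) : dist a b = |a.down - b.down| := by
  rw [ULift.dist_eq, Real.dist_eq]

theorem rl_geodesic : GeodesicSpace (ULift.{u} ℝ) := by
  intro x y
  set σ : ℝ := if x.down ≤ y.down then 1 else -1 with hσ
  have hσabs : |σ| = 1 := by
    rw [hσ]; split <;> simp
  refine ⟨fun t => ⟨x.down + t * σ⟩, ?_, ?_, ?_⟩
  · show (⟨x.down + 0 * σ⟩ : ULift.{u} ℝ) = x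
    exact ULift.down_injective (by simp)
  · show (⟨x.down + dist x y * σ⟩ : ULift.{u} ℝ) = y
    refine ULift.down_injective ?_
    show x.down + dist x y * σ = y.down
    rw [rdist, hσ]
    split_ifs with h
    · rw [abs_of_nonpos (by linarith)]; ring
    · rw [abs_of_nonneg (by linarith [le_of_not_ge h])]; ring
  · intro s _ t _
    show dist (⟨x.down + s * σ⟩ : ULift.{u} ℝ) ⟨x.down + t * σ⟩ = |s - t|
    rw [rdist]
    show |x.down + s * σ - (x.down + t * σ)| = |s - t|
    have : x.down + s * σ - (x.down + t * σ) = (s - t) * σ := by ring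
    rw [this, abs_mul, hσabs, mul_one]

theorem between_of_sum {a u b : ℝ} (h : |a - u| + |u - b| = |a - b|) :
    min a b ≤ u ∧ u ≤ max a b := by
  have hmm : min a b + max a b = a + b := min_add_max a b
  have habs : max a b - min a b = |a - b| := by
    rw [max_sub_min_eq_abs]; exact abs_sub_comm b a
  constructor
  · by_contra hcon
    push_neg at hcon
    have hua : u < a := lt_of_lt_of_le hcon (min_le_left a b)
    have hub : u < b := lt_of_lt_of_le hcon (min_le_right a b)
    rw [abs_of_nonneg (by linarith), abs_of_nonpos (by linarith)] at h
    linarith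
  · by_contra hcon
    push_neg at hcon
    have hua : a < u := lt_of_le_of_lt (le_max_left a b) hcon
    have hub : b < u := lt_of_le_of_lt (le_max_right a b) hcon
    rw [abs_of_nonpos (by linarith), abs_of_nonneg (by linarith)] at h
    linarith

/-- any point on a geodesic is metrically between the endpoints -/
theorem geod_between {X : Type*} [MetricSpace X] {x y : X} {f : ℝ → X}
    (hf : IsGeodesicSeg x y f) {p : X} (hp : p ∈ geodSet x y f) :
    dist x p + dist p y = dist x y := by
  obtain ⟨s, hs, rfl⟩ := hp
  have h0 : (0:ℝ) ∈ Set.Icc (0:ℝ) (dist x y) := ⟨le_refl 0, dist_nonneg⟩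
  have hd : dist x y ∈ Set.Icc (0:ℝ) (dist x y) := ⟨dist_nonneg, le_refl _⟩
  have e1 : dist (f 0) (f s) = |0 - s| := hf.2.2 0 h0 s hs
  have e2 : dist (f s) (f (dist x y)) = |s - dist x y| := hf.2.2 s hs (dist x y) hd
  rw [hf.1] at e1
  rw [hf.2.1] at e2
  rw [e1, e2, abs_of_nonpos (by linarith [hs.1]), abs_of_nonpos (by linarith [hs.2])]
  ring

/-- conversely, any real between the endpoints is on any geodesic in `ULift ℝ` -/
theorem mem_geod_of_between {x y : ULift.{u} ℝ} {f : ℝ → ULift.{u} ℝ}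
    (hf : IsGeodesicSeg x y f) {u : ℝ}
    (h1 : min x.down y.down ≤ u) (h2 : u ≤ max x.down y.down) :
    (⟨u⟩ : ULift ℝ) ∈ geodSet x y f := by
  set a := x.down with hadef
  set b := y.down with hbdef
  have hd : dist x y = |a - b| := rdist x y
  set s : ℝ := |a - u| with hsdef
  have hs0 : 0 ≤ s := abs_nonneg _
  have hsd : s ≤ dist x y := by
    rw [hsdef, hd]
    rcases le_total a b with hab|hab
    · rw [min_eq_left hab] at h1; rw [max_eq_right hab] at h2
      rw [abs_of_nonpos (by linarith), abs_of_nonpos (by linarith)]; linarith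
    · rw [min_eq_right hab] at h1; rw [max_eq_left hab] at h2
      rw [abs_of_nonneg (by linarith), abs_of_nonneg (by linarith)]; linarith
  have hsmem : s ∈ Set.Icc (0:ℝ) (dist x y) := ⟨hs0, hsd⟩
  refine ⟨s, hsmem, ?_⟩
  have h0 : (0:ℝ) ∈ Set.Icc (0:ℝ) (dist x y) := ⟨le_refl 0, dist_nonneg⟩
  have hdm : dist x y ∈ Set.Icc (0:ℝ) (dist x y) := ⟨dist_nonneg, le_refl _⟩
  have e1 : dist (f 0) (f s) = |0 - s| := hf.2.2 0 h0 s hsmem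
  have e2 : dist (f s) (f (dist x y)) = |s - dist x y| := hf.2.2 s hsmem (dist x y) hdm
  rw [hf.1] at e1
  rw [hf.2.1] at e2
  set v := (f s).down with hvdef
  have ev1 : |a - v| = s := by
    have : dist x (f s) = |a - v| := rdist x (f s)
    rw [← this, e1, abs_of_nonpos (by linarith)]; ring
  have ev2 : |v - b| = dist x y - s := by
    have : dist (f s) y = |v - b| := rdist (f s) y
    rw [← this, e2, abs_of_nonpos (by linarith)]; ring
  have hvb : min a b ≤ v ∧ v ≤ max a b := by
    apply between_of_sum
    rw [ev1, ev2, ← hd]; ring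
  refine ULift.down_injective ?_
  show v = u
  rcases le_total a b with hab|hab
  · rw [min_eq_left hab] at h1 hvb; rw [max_eq_right hab] at h2 hvb
    have h3 : |a - u| = u - a := by rw [abs_of_nonpos (by linarith)]; ring
    have h4 : |a - v| = v - a := by rw [abs_of_nonpos (by linarith [hvb.1])]; ring
    rw [h4] at ev1; rw [hsdef, h3] at ev1
    linarith
  · rw [min_eq_right hab] at h1 hvb; rw [max_eq_left hab] at h2 hvb
    have h3 : |a - u| = a - u := by rw [abs_of_nonneg (by linarith)]
    have h4 : |a - v| = a - v := by rw [abs_of_nonneg (by linarith [hvb.2])]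
    rw [h4] at ev1; rw [hsdef, h3] at ev1
    linarith

theorem split3 {a b c u : ℝ} (h1 : min a b ≤ u) (h2 : u ≤ max a b) :
    (min a c ≤ u ∧ u ≤ max a c) ∨ (min c b ≤ u ∧ u ≤ max c b) := by
  rcases le_total u c with hc|hc
  · rcases le_total a u with ha|ha
    · exact Or.inl ⟨le_trans (min_le_left a c) ha, le_trans hc (le_max_right a c)⟩
    · rcases le_total a b with hab|hab
      · rw [min_eq_left hab] at h1
        exact Or.inl ⟨le_trans (min_le_left a c) h1, le_trans hc (le_max_right a c)⟩
      · rw [min_eq_right hab] at h1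
        exact Or.inr ⟨le_trans (min_le_right c b) h1, le_trans hc (le_max_left c b)⟩
  · rcases le_total u a with ha|ha
    · exact Or.inl ⟨le_trans (min_le_right a c) hc, le_trans ha (le_max_left a c)⟩
    · rcases le_total a b with hab|hab
      · rw [max_eq_right hab] at h2
        exact Or.inr ⟨le_trans (min_le_left c b) hc, le_trans h2 (le_max_right c b)⟩
      · rw [max_eq_left hab] at h2
        exact Or.inl ⟨le_trans (min_le_right a c) hc, le_trans h2 (le_max_left a c)⟩

theorem mem_geod' {u v : ULift.{u} ℝ} {f : ℝ → ULift.{u} ℝ}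
    (hf : IsGeodesicSeg u v f) (p : ULift.{u} ℝ)
    (h1 : min u.down v.down ≤ p.down) (h2 : p.down ≤ max u.down v.down) :
    p ∈ geodSet u v f := by
  have hpp : p = (⟨p.down⟩ : ULift ℝ) := rfl
  rw [hpp]
  exact mem_geod_of_between hf h1 h2

theorem between_of_mem {u v : ULift.{u} ℝ} {f : ℝ → ULift.{u} ℝ}
    (hf : IsGeodesicSeg u v f) {p : ULift.{u} ℝ} (hp : p ∈ geodSet u v f) :
    min u.down v.down ≤ p.down ∧ p.down ≤ max u.down v.down := by
  apply between_of_sum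
  rw [← rdist, ← rdist, ← rdist]
  exact geod_between hf hp

theorem rl_rips : RipsHyperbolic (ULift.{u} ℝ) 0 := by
  intro x y z fxy fyz fxz hxy hyz hxz
  refine ⟨?_, ?_, ?_⟩
  · intro p hp
    obtain ⟨h1, h2⟩ := between_of_mem hxy hp
    rcases split3 (c := z.down) h1 h2 with ⟨hl, hr⟩|⟨hl, hr⟩
    · exact ⟨p, Set.mem_union_right _ (mem_geod' hxz p hl hr), by simp⟩
    · exact ⟨p, Set.mem_union_left _
        (mem_geod' hyz p (by rwa [min_comm]) (by rwa [max_comm])), by simp⟩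
  · intro p hp
    obtain ⟨h1, h2⟩ := between_of_mem hyz hp
    rcases split3 (c := x.down) h1 h2 with ⟨hl, hr⟩|⟨hl, hr⟩
    · exact ⟨p, Set.mem_union_left _
        (mem_geod' hxy p (by rwa [min_comm]) (by rwa [max_comm])), by simp⟩
    · exact ⟨p, Set.mem_union_right _ (mem_geod' hxz p hl hr), by simp⟩
  · intro p hp
    obtain ⟨h1, h2⟩ := between_of_mem hxz hp
    rcases split3 (c := y.down) h1 h2 with ⟨hl, hr⟩|⟨hl, hr⟩
    · exact ⟨p, Set.mem_union_left _ (mem_geod' hxy p hl hr), by simp⟩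
    · exact ⟨p, Set.mem_union_right _ (mem_geod' hyz p hl hr), by simp⟩


end NL7

/-- a nilpotent group has property (NL) iff every homomorphism to the
additive group `ℝ` is trivial. -/
theorem stmt_7 {G : Type uG} [Group G] [Group.IsNilpotent G] :
    PropNL.{uX, uG} G ↔ ∀ (φ : G →* Multiplicative ℝ) (g : G), φ g = 1 := by
  constructor
  · -- PropNL → all homomorphisms to ℝ are trivial
    intro hNL φ g
    by_contra hg
    set r : ℝ := Multiplicative.toAdd (φ g) with hr
    have hr0 : r ≠ 0 := by
      intro h0
      apply hg
      have : Multiplicative.ofAdd r = Multiplicative.ofAdd 0 := by rw [h0]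
      simpa [hr] using this
    set act : G → ULift.{uX} ℝ → ULift.{uX} ℝ :=
      fun h u => ⟨Multiplicative.toAdd (φ h) + u.down⟩ with hact
    have hIso : IsIsomAction G (ULift.{uX} ℝ) act := by
      refine ⟨?_, ?_, ?_⟩
      · intro u
        refine ULift.down_injective ?_
        show Multiplicative.toAdd (φ 1) + u.down = u.down
        rw [map_one]
        simp
      · intro a b u
        refine ULift.down_injective ?_
        show Multiplicative.toAdd (φ (a * b)) + u.down
            = Multiplicative.toAdd (φ a) + (Multiplicative.toAdd (φ b) + u.down)
        rw [map_mul]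
        simp [add_assoc]
      · intro a u v
        rw [NL7.rdist, NL7.rdist]
        show |Multiplicative.toAdd (φ a) + u.down - (Multiplicative.toAdd (φ a) + v.down)|
            = |u.down - v.down|
        ring_nf
    set A : GrpActHypSpace.{uX, uG} G :=
      { carrier := ULift.{uX} ℝ
        inst := inferInstance
        act := act
        isIsomAction := hIso
        δ := 0
        δ_nonneg := le_refl 0
        geodesic := NL7.rl_geodesic
        rips := NL7.rl_rips } with hA
    refine hNL A g ⟨⟨0⟩, |r| + |r|⁻¹, 0, ?_, le_refl 0, ?_⟩
    · -- 1 ≤ |r| + |r|⁻¹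
      have h1 : 0 < |r| := abs_pos.mpr hr0
      have h2 : 0 < |r|⁻¹ := by positivity
      nlinarith [mul_inv_cancel₀ (ne_of_gt h1), sq_nonneg (|r| - 1), h1, h2]
    · intro m n
      dsimp only
      have horb : ∀ k : ℤ, (A.act (g ^ k) ⟨0⟩).down = (k : ℝ) * r := by
        intro k
        show Multiplicative.toAdd (φ (g ^ k)) + 0 = (k : ℝ) * r
        rw [map_zpow, toAdd_zpow, zsmul_eq_mul, hr, add_zero]
      have hdist : dist (A.act (g ^ m) (⟨0⟩ : ULift.{uX} ℝ)) (A.act (g ^ n) ⟨0⟩)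
          = |(m : ℝ) - n| * |r| := by
        rw [NL7.rdist, horb, horb, ← abs_mul]
        congr 1
        ring
      have hz : zdist m n = |(m : ℝ) - n| := rfl
      have habs : (0:ℝ) ≤ |(m : ℝ) - n| := abs_nonneg _
      have hrpos : 0 < |r| := abs_pos.mpr hr0
      have hApos : 0 < |r| + |r|⁻¹ := by positivity
      constructor
      · rw [hz, hdist]
        rw [sub_zero, div_le_iff₀ hApos]
        have hkey : |r| * (|r| + |r|⁻¹) = |r| ^ 2 + 1 := by
          field_simp
        nlinarith [sq_nonneg (|r| - 1), sq_nonneg |r|]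
      · rw [hz, hdist]
        nlinarith [inv_nonneg.mpr (le_of_lt hrpos), habs]
  · -- all homomorphisms trivial → PropNL
    intro hφ A g hlox
    obtain ⟨x0, A0, B, hA0, hB0, hbd⟩ := hlox
    set p : G → ℝ := fun h => dist x0 (A.act h x0) with hp
    have hp1 : p 1 = 0 := by
      show dist x0 (A.act 1 x0) = 0
      rw [A.isIsomAction.act_one, dist_self]
    have hpinv : ∀ a : G, p a⁻¹ = p a := by
      intro a
      have h1 : A.act a (A.act a⁻¹ x0) = x0 := by
        rw [← A.isIsomAction.act_mul, mul_inv_cancel, A.isIsomAction.act_one]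
      show dist x0 (A.act a⁻¹ x0) = dist x0 (A.act a x0)
      calc dist x0 (A.act a⁻¹ x0)
          = dist (A.act a x0) (A.act a (A.act a⁻¹ x0)) :=
            (A.isIsomAction.isometry a _ _).symm
        _ = dist (A.act a x0) x0 := by rw [h1]
        _ = dist x0 (A.act a x0) := dist_comm _ _
    have hpmul : ∀ a b : G, p (a * b) ≤ p a + p b := by
      intro a b
      show dist x0 (A.act (a * b) x0) ≤ p a + p b
      rw [A.isIsomAction.act_mul]
      calc dist x0 (A.act a (A.act b x0))
          ≤ dist x0 (A.act a x0) + dist (A.act a x0) (A.act a (A.act b x0)) :=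
            dist_triangle _ _ _
        _ = p a + p b := by rw [A.isIsomAction.isometry a]
    have hlow : ∀ k : ℕ, (k : ℝ) / A0 - B ≤ p (g ^ k) := by
      intro k
      have h1 := (hbd (k : ℤ) 0).1
      dsimp only at h1
      have h2 : zdist (k : ℤ) 0 = (k : ℝ) := by
        show |((k:ℤ) : ℝ) - ((0:ℤ) : ℝ)| = (k : ℝ)
        push_cast
        simp
      rw [h2] at h1
      have h3 : A.act (g ^ (0:ℤ)) x0 = x0 := by
        rw [zpow_zero, A.isIsomAction.act_one]
      rw [h3] at h1
      have h4 : g ^ ((k:ℕ) : ℤ) = g ^ k := zpow_natCast g k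
      rw [h4] at h1
      calc (k : ℝ) / A0 - B ≤ dist (A.act (g ^ k) x0) x0 := h1
        _ = p (g ^ k) := dist_comm _ _
    obtain ⟨n₀, hn₀, hmem⟩ := NL7.exists_pow_mem_commutator hφ g
    obtain ⟨j, hj⟩ : ∃ j : ℕ, j = ⌈A0 * B⌉₊ + 1 := ⟨_, rfl⟩
    obtain ⟨n, hn⟩ : ∃ n : ℕ, n = n₀ * j := ⟨_, rfl⟩
    have hnc : g ^ n ∈ commutator G := by
      rw [hn, pow_mul]
      exact pow_mem hmem j
    have hA0pos : (0:ℝ) < A0 := lt_of_lt_of_le one_pos hA0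
    have hngt : A0 * B < (n : ℝ) := by
      have h1 : A0 * B ≤ (⌈A0 * B⌉₊ : ℝ) := Nat.le_ceil _
      have h2 : ⌈A0 * B⌉₊ + 1 ≤ n := by
        have hj' : j ≤ n := by
          rw [hn]
          exact Nat.le_mul_of_pos_left j hn₀
        omega
      have h3 : ((⌈A0 * B⌉₊ + 1 : ℕ) : ℝ) ≤ (n : ℝ) := by exact_mod_cast h2
      push_cast at h3
      linarith
    obtain ⟨ε₀, hε₀def⟩ : ∃ e : ℝ, e = (n : ℝ) / A0 - B := ⟨_, rfl⟩
    have hε₀ : 0 < ε₀ := by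
      rw [hε₀def, sub_pos, lt_div_iff₀ hA0pos]
      linarith
    obtain ⟨rr, hrr⟩ := nilpotent_iff_lowerCentralSeries.mp ‹Group.IsNilpotent G›
    obtain ⟨m, hm1, hmle⟩ := NL7.distortion rr G hrr p hp1 hpinv hpmul (g ^ n) hnc
      (ε₀ / 2) (by positivity)
    have hmr : (1:ℝ) ≤ (m : ℝ) := by exact_mod_cast hm1
    have hlower : (m : ℝ) * ε₀ ≤ p ((g ^ n) ^ m) := by
      rw [← pow_mul]
      have hkey := hlow (n * m)
      have hcast : ((n * m : ℕ) : ℝ) = (n : ℝ) * m := by push_cast; ring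
      rw [hcast] at hkey
      have hexp : (m : ℝ) * ε₀ ≤ (n : ℝ) * m / A0 - B := by
        rw [hε₀def]
        have hB1 : B * ((m : ℝ) - 1) ≥ 0 := by nlinarith
        have hdiv : (n : ℝ) * m / A0 = (m : ℝ) * ((n : ℝ) / A0) := by ring
        rw [hdiv]
        nlinarith
      exact le_trans hexp hkey
    nlinarith [hmle, hlower, hε₀, hmr]
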